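/- Let Γ = ℤ/2 * ℤ/3 ≅ PSL₂(ℤ). Then every virtually cyclic subgroup of Γ is either cyclic or infinite dihedral. -/

import Mathlib

set_option linter.unusedSectionVars false

namespace Stmt17Aux

open Monoid Monoid.CoprodI

variable {ι : Type*} [DecidableEq ι] {G : ι → Type*} [∀ i, Group (G i)]
  [∀ i, DecidableEq (G i)]

/-- Length of the reduced word of an element. -/
noncomputable def len (x : CoprodI G) : ℕ := (Word.equiv x).toList.length

theorem equiv_prod (w : Word G) : Word.equiv (Word.prod w) = w :=
  Word.equiv.apply_symm_apply w

theorem prod_equiv (x : CoprodI G) : Word.prod (Word.equiv x) = x :=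
  Word.equiv.symm_apply_apply x

theorem len_prod (w : Word G) : len (Word.prod w) = w.toList.length := by
  rw [len, equiv_prod]

theorem neword_equiv_prod {i j} (w : NeWord G i j) : Word.equiv w.prod = w.toWord :=
  equiv_prod _

theorem len_neword_prod {i j} (w : NeWord G i j) : len w.prod = w.toList.length := by
  rw [NeWord.prod, len_prod]; rfl

theorem neword_prod_ne_one {i j} (w : NeWord G i j) : w.prod ≠ 1 := by
  intro h
  have h2 : Word.equiv w.prod = Word.equiv (1 : CoprodI G) := by rw [h]
  rw [neword_equiv_prod] at h2
  have h3 : (1 : CoprodI G) = Word.prod Word.empty := rfl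
  rw [h3, equiv_prod] at h2
  have h4 := congrArg Word.toList h2
  exact w.toList_ne_nil h4

theorem exists_neword_pow {i j} (w : NeWord G i j) (hji : j ≠ i) (n : ℕ) :
    ∃ v : NeWord G i j, v.prod = w.prod ^ (n + 1) := by
  induction n with
  | zero => exact ⟨w, by rw [pow_one]⟩
  | succ n ih =>
    obtain ⟨v, hv⟩ := ih
    exact ⟨v.append hji w, by rw [NeWord.append_prod, hv, ← pow_succ]⟩

theorem not_isOfFinOrder_neword {i j} (w : NeWord G i j) (hji : j ≠ i) :
    ¬ IsOfFinOrder w.prod := by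
  rw [isOfFinOrder_iff_pow_eq_one]
  rintro ⟨n, hn, hpow⟩
  obtain ⟨m, rfl⟩ := Nat.exists_eq_succ_of_ne_zero hn.ne'
  obtain ⟨v, hv⟩ := exists_neword_pow w hji m
  exact neword_prod_ne_one v (hv.trans hpow)

/-- Splitting off the first letter. -/
theorem exists_cons_of_ne_one {x : CoprodI G} (hx : x ≠ 1) :
    ∃ (i : ι) (m : G i) (w : Word G), m ≠ 1 ∧ w.fstIdx ≠ some i ∧
      x = of m * w.prod ∧ (Word.equiv x).toList = ⟨i, m⟩ :: w.toList := by
  have key : ∀ (W : Word G), W.prod ≠ 1 →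
      ∃ (i : ι) (m : G i) (w : Word G), m ≠ 1 ∧ w.fstIdx ≠ some i ∧
        W.prod = of m * w.prod ∧ W.toList = ⟨i, m⟩ :: w.toList := by
    intro W
    induction W using Word.consRecOn with
    | empty => intro h; exact absurd rfl h
    | cons i m w h1 h2 _ =>
      intro _
      exact ⟨i, m, w, h2, h1, (Word.prod_cons i m w h2 h1).symm, rfl⟩
  obtain ⟨i, m, w, h1, h2, h3, h4⟩ := key (Word.equiv x) (by rw [prod_equiv]; exact hx)
  exact ⟨i, m, w, h1, h2, by rw [← prod_equiv x, h3], h4⟩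

theorem len_of_mul_prod {i} {m : G i} {w : Word G} (hm : m ≠ 1) (hw : w.fstIdx ≠ some i) :
    len (of m * Word.prod w) = w.toList.length + 1 := by
  rw [← Word.prod_cons i m w hm hw, len_prod]
  rfl

theorem len_eq_zero_iff {x : CoprodI G} : len x = 0 ↔ x = 1 := by
  constructor
  · intro h
    have : Word.equiv x = Word.empty := by
      apply Word.ext
      exact List.length_eq_zero_iff.mp h
    have := congrArg Word.prod this
    rwa [prod_equiv] at this
  · rintro rfl
    rfl

theorem length_toList_inv {i j} (w : NeWord G i j) :
    w.inv.toList.length = w.toList.length := by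
  induction w with
  | singleton x h => rfl
  | append w1 h w2 ih1 ih2 =>
    simp only [NeWord.inv, NeWord.toList, List.length_append, ih1, ih2]
    omega

theorem len_inv (x : CoprodI G) : len x⁻¹ = len x := by
  by_cases hx : x = 1
  · subst hx; simp
  · have hW : Word.equiv x ≠ Word.empty := by
      intro h
      apply hx
      have := congrArg Word.prod h
      rwa [prod_equiv] at this
    obtain ⟨i, j, w, hw⟩ := NeWord.of_word (Word.equiv x) hW
    have hx' : x = w.prod := by
      rw [NeWord.prod, hw, prod_equiv]
    rw [hx', ← NeWord.inv_prod, len_neword_prod, len_neword_prod, length_toList_inv]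

end Stmt17Aux

theorem isOfFinOrder_conj {Γ : Type*} [Group Γ] {x : Γ} (g : Γ) (hx : IsOfFinOrder x) :
    IsOfFinOrder (g * x * g⁻¹) := by
  rw [isOfFinOrder_iff_pow_eq_one] at hx ⊢
  obtain ⟨n, hn, hp⟩ := hx
  exact ⟨n, hn, by rw [conj_pow, hp, mul_one, mul_inv_cancel]⟩

namespace Stmt17Aux

open Monoid Monoid.CoprodI

variable {ι : Type*} [DecidableEq ι] {G : ι → Type*} [∀ i, Group (G i)]
  [∀ i, DecidableEq (G i)]

theorem exists_sym {j k i : ι} (N : NeWord G j k) (hki : k ≠ i) (c : G i) (hc : c ≠ 1) :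
    ∃ S : NeWord G j j, S.prod = N.prod * of c * N.prod⁻¹ ∧
      S.toList.length = 2 * N.toList.length + 1 := by
  refine ⟨(N.append hki (NeWord.singleton c hc)).append (Ne.symm hki) N.inv, ?_, ?_⟩
  · rw [NeWord.append_prod, NeWord.append_prod, NeWord.prod_singleton, NeWord.inv_prod]
  · simp only [NeWord.toList, List.length_append, List.length_singleton, length_toList_inv]
    omega

theorem conj_shape (x : CoprodI G) {i : ι} (m : G i) (hm : m ≠ 1) :
    (∃ u : G i, x = of u) ∨
    (∃ (j k : ι) (N : NeWord G j k) (t : G i), k ≠ i ∧ x = N.prod * of t ∧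
      ∃ c : G i, c ≠ 1 ∧ x * of m * x⁻¹ = N.prod * of c * N.prod⁻¹ ∧
        len (x * of m * x⁻¹) = 2 * N.toList.length + 1) := by
  suffices h : ∀ n (x : CoprodI G), len x ≤ n → ∀ (i : ι) (m : G i), m ≠ 1 →
      (∃ u : G i, x = of u) ∨
      (∃ (j k : ι) (N : NeWord G j k) (t : G i), k ≠ i ∧ x = N.prod * of t ∧
        ∃ c : G i, c ≠ 1 ∧ x * of m * x⁻¹ = N.prod * of c * N.prod⁻¹ ∧
          len (x * of m * x⁻¹) = 2 * N.toList.length + 1) by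
    exact h (len x) x le_rfl i m hm
  intro n
  induction n with
  | zero =>
    intro x hx i m hm
    left
    have hx1 : x = 1 := len_eq_zero_iff.mp (Nat.le_zero.mp hx)
    exact ⟨1, by rw [hx1, map_one]⟩
  | succ n ih =>
    intro x hx i m hm
    by_cases hx1 : x = 1
    · left; exact ⟨1, by rw [hx1, map_one]⟩
    obtain ⟨j, s, y, hs, hyfst, hxeq, hlist⟩ := exists_cons_of_ne_one hx1
    have hlenx : len x = y.toList.length + 1 := by
      rw [len, hlist]; simp
    have hleny : len (Word.prod y) ≤ n := by
      rw [len_prod]; omega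
    rcases ih (Word.prod y) hleny i m hm with ⟨u, hu⟩ |
      ⟨j₁, k₁, N, t, hk₁, hyeq, c, hc, hconj, hlen⟩
    · by_cases hji : j = i
      · subst hji; left; exact ⟨s * u, by rw [map_mul, hxeq, hu]⟩
      · by_cases hu1 : u = 1
        · have hx2 : x = of s := by rw [hxeq, hu, hu1, map_one, mul_one]
          obtain ⟨S, hS, hSl⟩ := exists_sym (NeWord.singleton s hs) hji m hm
          have hx3 : x * of m * x⁻¹ = S.prod := by
            rw [hS, NeWord.prod_singleton, hx2]
          right
          refine ⟨j, j, NeWord.singleton s hs, 1, hji, ?_, m, hm, ?_, ?_⟩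
          · rw [map_one, mul_one, hx2, NeWord.prod_singleton]
          · exact hx3.trans hS
          · rw [hx3, len_neword_prod, hSl]
        · have hc' : u * m * u⁻¹ ≠ 1 := by
            intro h
            apply hm
            have := congrArg (fun g => u⁻¹ * g * u) h
            simpa [mul_assoc] using this
          obtain ⟨S, hS, hSl⟩ := exists_sym (NeWord.singleton s hs) hji (u * m * u⁻¹) hc'
          have hx2 : x = of s * of u := by rw [hxeq, hu]
          have hx3 : x * of m * x⁻¹ = S.prod := by
            rw [hS, NeWord.prod_singleton, hx2]
            simp only [map_mul, map_inv]
            group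
          right
          refine ⟨j, j, NeWord.singleton s hs, u, hji, ?_, u * m * u⁻¹, hc', ?_, ?_⟩
          · rw [hx2, NeWord.prod_singleton]
          · exact hx3.trans hS
          · rw [hx3, len_neword_prod, hSl]
    · have hyne : Word.fstIdx y = some j₁ := by
        by_cases ht1 : t = 1
        · have hy2 : Word.prod y = NeWord.prod N := by rw [hyeq, ht1, map_one, mul_one]
          have hy3 : y = N.toWord := by
            rw [← equiv_prod y, hy2, neword_equiv_prod]
          rw [hy3]
          show (N.toWord.toList.head?).map Sigma.fst = some j₁
          rw [show N.toWord.toList = N.toList from rfl, NeWord.toList_head?]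
          rfl
        · have hy2 : Word.prod y = (N.append hk₁ (NeWord.singleton t ht1)).prod := by
            rw [NeWord.append_prod, NeWord.prod_singleton, hyeq]
          have hy3 : y = (N.append hk₁ (NeWord.singleton t ht1)).toWord := by
            rw [← equiv_prod y, hy2, neword_equiv_prod]
          rw [hy3]
          show ((N.append hk₁ (NeWord.singleton t ht1)).toWord.toList.head?).map Sigma.fst
            = some j₁
          rw [show (N.append hk₁ (NeWord.singleton t ht1)).toWord.toList
              = (N.append hk₁ (NeWord.singleton t ht1)).toList from rfl, NeWord.toList_head?]
          rfl
      have hjj₁ : j ≠ j₁ := fun h => hyfst (h ▸ hyne)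
      have hx2 : x = ((NeWord.singleton s hs).append hjj₁ N).prod * of t := by
        rw [hxeq, hyeq, NeWord.append_prod, NeWord.prod_singleton, mul_assoc]
      have hconj2 : x * of m * x⁻¹ =
          ((NeWord.singleton s hs).append hjj₁ N).prod * of c *
            ((NeWord.singleton s hs).append hjj₁ N).prod⁻¹ := by
        rw [hxeq]
        have h9 : of s * Word.prod y * of m * (of s * Word.prod y)⁻¹ =
            of s * (Word.prod y * of m * (Word.prod y)⁻¹) * (of s)⁻¹ := by group
        rw [h9, hconj, NeWord.append_prod, NeWord.prod_singleton]
        group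
      obtain ⟨S, hS, hSl⟩ := exists_sym ((NeWord.singleton s hs).append hjj₁ N) hk₁ c hc
      right
      refine ⟨j, k₁, (NeWord.singleton s hs).append hjj₁ N, t, hk₁, hx2, c, hc, hconj2, ?_⟩
      rw [hconj2, ← hS, len_neword_prod, hSl]

theorem eq_of_of_conj {x : CoprodI G} {i : ι} {m m' : G i} (hm : m ≠ 1)
    (h : x * of m * x⁻¹ = of m') : ∃ u : G i, x = of u ∧ m' = u * m * u⁻¹ := by
  rcases conj_shape x m hm with ⟨u, rfl⟩ | ⟨j, k, N, t, hk, hxeq, c, hc, hconj, hlen⟩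
  · refine ⟨u, rfl, ?_⟩
    rw [← map_inv, ← map_mul, ← map_mul] at h
    exact (of_injective i h).symm
  · exfalso
    have hm' : m' ≠ 1 := by
      rintro rfl
      rw [map_one] at h
      have h3 : of m = (1 : CoprodI G) := by
        have h4 : x⁻¹ * (x * of m * x⁻¹) * x = of m := by group
        rw [← h4, h]
        group
      apply hm
      exact of_injective i (by rw [h3, map_one])
    have h1 : len (x * of m * x⁻¹) = 1 := by
      rw [h, ← NeWord.prod_singleton (x := m') hm', len_neword_prod]
      rfl
    rw [hlen] at h1
    have := N.toList_ne_nil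
    have : N.toList.length ≠ 0 := fun h0 => this (List.length_eq_zero_iff.mp h0)
    omega

theorem conj_factor_of_isOfFinOrder [Nonempty ι] {x : CoprodI G} (hx : IsOfFinOrder x) :
    ∃ (g : CoprodI G) (i : ι) (m : G i), x = g * of m * g⁻¹ := by
  suffices h : ∀ n (x : CoprodI G), len x ≤ n → IsOfFinOrder x →
      ∃ (g : CoprodI G) (i : ι) (m : G i), x = g * of m * g⁻¹ by
    exact h (len x) x le_rfl hx
  intro n
  induction n with
  | zero =>
    intro x hx _
    have hx1 : x = 1 := len_eq_zero_iff.mp (Nat.le_zero.mp hx)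
    exact ⟨1, Classical.arbitrary ι, 1, by simp [hx1]⟩
  | succ n ih =>
    intro x hx hfin
    by_cases hx1 : x = 1
    · exact ⟨1, Classical.arbitrary ι, 1, by simp [hx1]⟩
    have hW : Word.equiv x ≠ Word.empty := by
      intro h
      apply hx1
      have := congrArg Word.prod h
      rwa [prod_equiv] at this
    obtain ⟨j, k, w', hw'⟩ := NeWord.of_word (Word.equiv x) hW
    have hxw : x = w'.prod := by rw [NeWord.prod, hw', prod_equiv]
    by_cases hjk : k = j
    swap
    · rw [hxw] at hfin
      exact absurd hfin (not_isOfFinOrder_neword w' hjk)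
    subst hjk
    obtain ⟨j', s, y, hs, hyfst, hxeq, hlist⟩ := exists_cons_of_ne_one hx1
    have htl : (Word.equiv x).toList = w'.toList := congrArg Word.toList hw'.symm
    have hhead : ((⟨j', s⟩ : Σ i, G i) :: y.toList).head? = some ⟨k, w'.head⟩ := by
      rw [← hlist, htl, NeWord.toList_head?]
    simp only [List.head?_cons, Option.some.injEq] at hhead
    have hj' : j' = k := congrArg Sigma.fst hhead
    subst hj'
    by_cases hy1 : Word.prod y = 1
    · exact ⟨1, j', s, by simp [hxeq, hy1]⟩
    have hlenx : len x = y.toList.length + 1 := by rw [len, hlist]; simp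
    have hleny : len (Word.prod y) ≤ n := by rw [len_prod]; omega
    -- identify last index of y
    have hyne : y ≠ Word.empty := by
      intro h; apply hy1; rw [h]; rfl
    obtain ⟨a, b, wy, hwy⟩ := NeWord.of_word y hyne
    have hyprod : Word.prod y = wy.prod := by rw [NeWord.prod, hwy]
    have hytl : y.toList = wy.toList := congrArg Word.toList hwy.symm
    have hxlast : (Word.equiv x).toList.getLast? = some ⟨j', w'.last⟩ := by
      rw [htl, NeWord.toList_getLast?]
    have hylist_ne : y.toList ≠ [] := by
      rw [hytl]; exact wy.toList_ne_nil
    have hxy_last : (Word.equiv x).toList.getLast? = y.toList.getLast? := by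
      rw [hlist]
      cases hyl : y.toList with
      | nil => exact absurd hyl hylist_ne
      | cons hd tl => rw [List.getLast?_cons_cons]
    have hylast : y.toList.getLast? = some ⟨b, wy.last⟩ := by
      rw [hytl, NeWord.toList_getLast?]
    have hb : b = j' := by
      rw [hxy_last, hylast] at hxlast
      simp only [Option.some.injEq] at hxlast
      exact congrArg Sigma.fst hxlast
    subst hb
    -- conjugate
    set x' := Word.prod y * of s with hx'def
    have hxconj : x = of s * x' * (of s)⁻¹ := by rw [hx'def, hxeq]; group
    have hx'fin : IsOfFinOrder x' := by
      have h7 : x' = (of s)⁻¹ * x * ((of s)⁻¹)⁻¹ := by rw [hxconj]; group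
      rw [h7]
      exact isOfFinOrder_conj _ hfin
    have hqne : (Word.prod y)⁻¹ ≠ 1 := by
      simpa using hy1
    obtain ⟨jq, r, z, hr, hzfst, hqeq, hqlist⟩ := exists_cons_of_ne_one hqne
    have hqeqv : Word.equiv (Word.prod y)⁻¹ = wy.inv.toWord := by
      rw [hyprod, ← NeWord.inv_prod, neword_equiv_prod]
    have hqhead : ((⟨jq, r⟩ : Σ i, G i) :: z.toList).head? = some ⟨b, wy.inv.head⟩ := by
      rw [← hqlist, hqeqv, show wy.inv.toWord.toList = wy.inv.toList from rfl,
        NeWord.toList_head?]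
    simp only [List.head?_cons, Option.some.injEq] at hqhead
    have hjq : jq = b := congrArg Sigma.fst hqhead
    subst hjq
    have hx'inv : x'⁻¹ = of (s⁻¹ * r) * Word.prod z := by
      rw [hx'def, mul_inv_rev, hqeq, ← map_inv, ← mul_assoc, ← map_mul]
    have hlenq : len (Word.prod y)⁻¹ = z.toList.length + 1 := by
      rw [len, hqlist]; simp
    have hlenq2 : len (Word.prod y)⁻¹ ≤ n := by
      rw [len_inv]; exact hleny
    have hlenx' : len x' ≤ n := by
      rw [← len_inv x']
      by_cases hsr : s⁻¹ * r = 1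
      · rw [hx'inv, hsr, map_one, one_mul, len_prod]
        omega
      · rw [hx'inv, len_of_mul_prod hsr hzfst]
        omega
    obtain ⟨g, i0, m0, hgm⟩ := ih x' hlenx' hx'fin
    exact ⟨of s * g, i0, m0, by rw [hxconj, hgm]; group⟩

end Stmt17Aux

namespace Stmt17Aux

open Monoid Monoid.CoprodI

theorem conj_comm_aux {Γ : Type*} [Group Γ] {g a y : Γ}
    (h : (g * a * g⁻¹) * y = y * (g * a * g⁻¹)) :
    (g⁻¹ * y * g) * a * (g⁻¹ * y * g)⁻¹ = a := by
  calc (g⁻¹ * y * g) * a * (g⁻¹ * y * g)⁻¹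
      = g⁻¹ * (y * (g * a * g⁻¹)) * y⁻¹ * g := by group
    _ = g⁻¹ * ((g * a * g⁻¹) * y) * y⁻¹ * g := by rw [h]
    _ = a := by group

theorem conj_inv_aux {Γ : Type*} [Group Γ] {g a x : Γ}
    (h : x * (g * a * g⁻¹) * x⁻¹ = (g * a * g⁻¹)⁻¹) :
    (g⁻¹ * x * g) * a * (g⁻¹ * x * g)⁻¹ = a⁻¹ := by
  calc (g⁻¹ * x * g) * a * (g⁻¹ * x * g)⁻¹
      = g⁻¹ * (x * (g * a * g⁻¹) * x⁻¹) * g := by group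
    _ = g⁻¹ * (g * a * g⁻¹)⁻¹ * g := by rw [h]
    _ = a⁻¹ := by group

theorem conj_cancel {Γ : Type*} [Group Γ] (g z : Γ) : g * (g⁻¹ * z * g) * g⁻¹ = z := by
  group

abbrev M2 := Multiplicative (ZMod 2)
abbrev M3 := Multiplicative (ZMod 3)

def Gf : Bool → Type
  | true => M2
  | false => M3

instance instGroupGf : (b : Bool) → CommGroup (Gf b)
  | true => inferInstanceAs (CommGroup M2)
  | false => inferInstanceAs (CommGroup M3)

instance instDecEqGf : (b : Bool) → DecidableEq (Gf b)
  | true => inferInstanceAs (DecidableEq M2)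
  | false => inferInstanceAs (DecidableEq M3)

instance instFintypeGf : (b : Bool) → Fintype (Gf b)
  | true => inferInstanceAs (Fintype M2)
  | false => inferInstanceAs (Fintype M3)

abbrev Δ := CoprodI Gf

theorem gf_sq : ∀ m : Gf true, m * m = 1 := by decide

theorem gf_cube : ∀ m : Gf false, m * m * m = 1 := by decide

theorem gf_no_inv3 : ∀ m : Gf false, m * m = 1 → m = 1 := by decide

theorem gf_no_ord3_2 : ∀ m : Gf true, m * m * m = 1 → m = 1 := by decide

theorem gf_unique2 : ∀ m m' : Gf true, m ≠ 1 → m' ≠ 1 → m = m' := by decide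

theorem gf_gen3 : ∀ m u : Gf false, m ≠ 1 → u = 1 ∨ u = m ∨ u = m * m := by decide

theorem gf_self_inv3 : ∀ m : Gf false, m⁻¹ = m → m = 1 := by decide

theorem gf_comm {b : Bool} (u m : Gf b) : u * m * u⁻¹ = m := by
  rw [mul_comm u m, mul_assoc, mul_inv_cancel, mul_one]

theorem gf_pow6 {b : Bool} (m : Gf b) : m ^ 6 = 1 := by
  cases b
  · have h := gf_cube m
    have h3 : m ^ 3 = m * m * m := by rw [pow_succ, pow_two]
    calc m ^ 6 = m ^ 3 * m ^ 3 := by rw [← pow_add]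
    _ = 1 := by rw [h3, h, one_mul]
  · have h := gf_sq m
    have h2 : m ^ 2 = m * m := pow_two m
    calc m ^ 6 = m ^ 2 * m ^ 2 * m ^ 2 := by rw [← pow_add, ← pow_add]
    _ = 1 := by rw [h2, h, one_mul, mul_one]

theorem orderOf_conj' {Γ : Type*} [Group Γ] (g x : Γ) :
    orderOf (g * x * g⁻¹) = orderOf x := by
  have := orderOf_injective (MulAut.conj g).toMonoidHom (MulEquiv.injective _) x
  simpa using this

theorem isOfFinOrder_conj' {Γ : Type*} [Group Γ] {g x : Γ} (hx : IsOfFinOrder x) :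
    IsOfFinOrder (g * x * g⁻¹) := isOfFinOrder_conj g hx

/-- Torsion elements are conjugate into a factor. -/
theorem delta_torsion {x : Δ} (hx : IsOfFinOrder x) :
    ∃ (g : Δ) (b : Bool) (m : Gf b), x = g * of m * g⁻¹ :=
  conj_factor_of_isOfFinOrder hx

theorem of_conj_ne_one {g : Δ} {b : Bool} {m : Gf b} (h : g * of m * g⁻¹ ≠ 1) : m ≠ 1 := by
  rintro rfl
  simp at h

theorem conj_of_pow_eq_one {g : Δ} {b : Bool} {m : Gf b} {n : ℕ}
    (h : (g * of m * g⁻¹) ^ n = 1) : m ^ n = 1 := by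
  rw [conj_pow] at h
  have h2 : of (m ^ n) = (1 : Δ) := by
    rw [map_pow]
    have := congrArg (fun w => g⁻¹ * w * g) h
    simpa [mul_assoc] using this
  exact of_injective b (by rw [h2, map_one])

theorem delta_orders {x : Δ} (hx : IsOfFinOrder x) :
    orderOf x = 1 ∨ orderOf x = 2 ∨ orderOf x = 3 := by
  obtain ⟨g, b, m, rfl⟩ := delta_torsion hx
  rw [orderOf_conj', orderOf_injective (of (i := b)) (of_injective b) m]
  cases b
  · have h3 : orderOf m ∣ 3 := orderOf_dvd_of_pow_eq_one (by
      have h := gf_cube m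
      calc m ^ 3 = m * m * m := by rw [pow_succ, pow_two]
      _ = 1 := h)
    rcases (Nat.Prime.eq_one_or_self_of_dvd Nat.prime_three _ h3) with h | h
    · left; exact h
    · right; right; exact h
  · have h2 : orderOf m ∣ 2 := orderOf_dvd_of_pow_eq_one (by
      have h := gf_sq m
      calc m ^ 2 = m * m := pow_two m
      _ = 1 := h)
    rcases (Nat.Prime.eq_one_or_self_of_dvd Nat.prime_two _ h2) with h | h
    · left; exact h
    · right; left; exact h

theorem delta_no_klein {x y : Δ} (hx2 : x * x = 1) (hy2 : y * y = 1)
    (hcomm : x * y = y * x) (hx1 : x ≠ 1) (hy1 : y ≠ 1) : x = y := by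
  have hxfin : IsOfFinOrder x := isOfFinOrder_iff_pow_eq_one.mpr ⟨2, by norm_num, by
    rw [pow_two]; exact hx2⟩
  obtain ⟨g, b, m, rfl⟩ := delta_torsion hxfin
  have hm1 : m ≠ 1 := of_conj_ne_one hx1
  have hmm : m * m = 1 := by
    have := conj_of_pow_eq_one (n := 2) (by rw [pow_two]; exact hx2)
    rwa [pow_two] at this
  have hb : b = true := by
    cases b
    · exact absurd (gf_no_inv3 m hmm) hm1
    · rfl
  subst hb
  have hzc : (g⁻¹ * y * g) * of m * (g⁻¹ * y * g)⁻¹ = of m := conj_comm_aux hcomm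
  obtain ⟨u, hu, -⟩ := eq_of_of_conj hm1 hzc
  have hu1 : u ≠ 1 := by
    rintro rfl
    rw [map_one] at hu
    apply hy1
    have := congrArg (fun w => g * w * g⁻¹) hu
    simpa [conj_cancel] using this
  have hmu : m = u := gf_unique2 m u hm1 hu1
  have : y = g * of u * g⁻¹ := by
    rw [← hu, conj_cancel]
  rw [this, hmu]

theorem delta_three_comm {x y : Δ} (hx3 : x ^ 3 = 1) (hy3 : y ^ 3 = 1)
    (hcomm : x * y = y * x) (hx1 : x ≠ 1) : ∃ n : ℕ, y = x ^ n := by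
  have hxfin : IsOfFinOrder x := isOfFinOrder_iff_pow_eq_one.mpr ⟨3, by norm_num, hx3⟩
  obtain ⟨g, b, m, rfl⟩ := delta_torsion hxfin
  have hm1 : m ≠ 1 := of_conj_ne_one hx1
  have hmmm : m * m * m = 1 := by
    have := conj_of_pow_eq_one (n := 3) hx3
    calc m * m * m = m ^ 3 := by rw [pow_succ, pow_two]
    _ = 1 := this
  have hb : b = false := by
    cases b
    · rfl
    · exact absurd (gf_no_ord3_2 m hmmm) hm1
  subst hb
  have hzc : (g⁻¹ * y * g) * of m * (g⁻¹ * y * g)⁻¹ = of m := conj_comm_aux hcomm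
  obtain ⟨u, hu, -⟩ := eq_of_of_conj hm1 hzc
  have hy : y = g * of u * g⁻¹ := by rw [← hu, conj_cancel]
  rcases gf_gen3 m u hm1 with h | h | h
  · exact ⟨0, by rw [hy, h, map_one, pow_zero]; group⟩
  · exact ⟨1, by rw [hy, h, pow_one]⟩
  · exact ⟨2, by rw [hy, h, map_mul, conj_pow, pow_two]⟩

theorem delta_no_s3 {x y : Δ} (hy3 : y ^ 3 = 1) (hconj : x * y * x⁻¹ = y⁻¹) : y = 1 := by
  by_contra hy1
  have hyfin : IsOfFinOrder y := isOfFinOrder_iff_pow_eq_one.mpr ⟨3, by norm_num, hy3⟩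
  obtain ⟨g, b, m, rfl⟩ := delta_torsion hyfin
  have hm1 : m ≠ 1 := of_conj_ne_one hy1
  have hmmm : m * m * m = 1 := by
    have := conj_of_pow_eq_one (n := 3) hy3
    calc m * m * m = m ^ 3 := by rw [pow_succ, pow_two]
    _ = 1 := this
  have hb : b = false := by
    cases b
    · rfl
    · exact absurd (gf_no_ord3_2 m hmmm) hm1
  subst hb
  have hzc : (g⁻¹ * x * g) * of m * (g⁻¹ * x * g)⁻¹ = (of m)⁻¹ := conj_inv_aux hconj
  rw [← map_inv] at hzc
  obtain ⟨u, hu, hum⟩ := eq_of_of_conj hm1 hzc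
  rw [gf_comm] at hum
  exact hm1 (gf_self_inv3 m (by rw [hum]))

/-- No nontrivial torsion element commutes with an element of infinite order. -/
theorem delta_torsion_free_comm {t z : Δ} (ht : IsOfFinOrder t) (ht1 : t ≠ 1)
    (hz : ¬ IsOfFinOrder z) (hcomm : t * z = z * t) : False := by
  obtain ⟨g, b, m, rfl⟩ := delta_torsion ht
  have hm1 : m ≠ 1 := of_conj_ne_one ht1
  have hzc : (g⁻¹ * z * g) * of m * (g⁻¹ * z * g)⁻¹ = of m := conj_comm_aux hcomm
  obtain ⟨u, hu, -⟩ := eq_of_of_conj hm1 hzc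
  apply hz
  have h1 : IsOfFinOrder (of (i := b) u) :=
    isOfFinOrder_iff_pow_eq_one.mpr ⟨6, by norm_num, by rw [← map_pow, gf_pow6, map_one]⟩
  have h2 : z = g * of u * g⁻¹ := by rw [← hu, conj_cancel]
  rw [h2]
  exact isOfFinOrder_conj' h1

end Stmt17Aux

namespace Stmt17Aux

theorem finite_subgroup_cyclic {Γ : Type*} [Group Γ] (H : Subgroup Γ) [Finite H]
    (hord : ∀ x : Γ, IsOfFinOrder x → orderOf x = 1 ∨ orderOf x = 2 ∨ orderOf x = 3)
    (hklein : ∀ x y : Γ, x * x = 1 → y * y = 1 → x * y = y * x → x ≠ 1 → y ≠ 1 → x = y)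
    (h33 : ∀ x y : Γ, x ^ 3 = 1 → y ^ 3 = 1 → x * y = y * x → x ≠ 1 → ∃ n : ℕ, y = x ^ n)
    (hs3 : ∀ x y : Γ, y ^ 3 = 1 → x * y * x⁻¹ = y⁻¹ → y = 1) :
    IsCyclic ↥H := by
  have hordH : ∀ (R : Subgroup ↥H) (x : ↥R),
      orderOf x = 1 ∨ orderOf x = 2 ∨ orderOf x = 3 := by
    intro R x
    have e1 : orderOf ((H.subtype.comp R.subtype) x) = orderOf x :=
      orderOf_injective _ (fun a b hab => R.subtype_injective (H.subtype_injective hab)) x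
    rw [← e1]
    exact hord _ ((H.subtype.comp R.subtype).isOfFinOrder (isOfFinOrder_of_finite x))
  -- no subgroup of order 4
  have h4 : ¬ (4 ∣ Nat.card ↥H) := by
    intro h4
    haveI : Fact (Nat.Prime 2) := ⟨Nat.prime_two⟩
    obtain ⟨R, hR⟩ := Sylow.exists_subgroup_card_pow_prime (G := ↥H) 2 (n := 2)
      (by norm_num at h4 ⊢; exact h4)
    have hsq : ∀ x : ↥R, x * x = 1 := by
      intro x
      have hdvd : orderOf x ∣ 4 := by
        have h0 := orderOf_dvd_natCard x
        rwa [hR] at h0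
      have h2 : orderOf x ∣ 2 := by
        rcases hordH R x with h | h | h
        · rw [h]; norm_num
        · rw [h]
        · rw [h] at hdvd; norm_num at hdvd
      have := orderOf_dvd_iff_pow_eq_one.mp h2
      rwa [pow_two] at this
    have hinv : ∀ g : ↥R, g⁻¹ = g := fun g => inv_eq_of_mul_eq_one_right (hsq g)
    have hab : ∀ a b : ↥R, a * b = b * a := by
      intro a b
      calc a * b = (a * b)⁻¹ := (hinv _).symm
      _ = b⁻¹ * a⁻¹ := mul_inv_rev a b
      _ = b * a := by rw [hinv, hinv]
    have hcard1 : (1 : ℕ) < Nat.card ↥R := by rw [hR]; norm_num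
    haveI : Nontrivial ↥R := Finite.one_lt_card_iff_nontrivial.mp hcard1
    obtain ⟨x, hx1⟩ := exists_ne (1 : ↥R)
    have hx2 : orderOf x = 2 := by
      rcases hordH R x with h | h | h
      · exact absurd (orderOf_eq_one_iff.mp h) hx1
      · exact h
      · exfalso
        have hdd : orderOf x ∣ 2 := orderOf_dvd_iff_pow_eq_one.mpr (by rw [pow_two]; exact hsq x)
        rw [h] at hdd; norm_num at hdd
    have hzt : Subgroup.zpowers x ≠ ⊤ := by
      intro htop
      have hc : Nat.card ↥(Subgroup.zpowers x) = 2 := by rw [Nat.card_zpowers, hx2]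
      have he : Nat.card ↥(⊤ : Subgroup ↥R) = Nat.card ↥R :=
        Nat.card_congr Subgroup.topEquiv.toEquiv
      rw [htop, he, hR] at hc
      norm_num at hc
    obtain ⟨y, hy⟩ : ∃ y : ↥R, y ∉ Subgroup.zpowers x := by
      by_contra hall
      push_neg at hall
      exact hzt ((Subgroup.eq_top_iff' _).mpr hall)
    have hy1 : y ≠ 1 := fun h => hy (h ▸ (Subgroup.zpowers x).one_mem)
    have hyx : y ≠ x := fun h => hy (h ▸ Subgroup.mem_zpowers x)
    set f := H.subtype.comp R.subtype with hf
    have hfinj : Function.Injective f :=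
      fun a b hab' => R.subtype_injective (H.subtype_injective hab')
    have hXY : f x = f y := by
      apply hklein
      · rw [← map_mul, hsq, map_one]
      · rw [← map_mul, hsq, map_one]
      · rw [← map_mul, ← map_mul, hab]
      · intro h; exact hx1 (hfinj (by rw [h, map_one]))
      · intro h; exact hy1 (hfinj (by rw [h, map_one]))
    exact hyx (hfinj hXY).symm
  -- no subgroup of order 9
  have h9 : ¬ (9 ∣ Nat.card ↥H) := by
    intro h9
    haveI : Fact (Nat.Prime 3) := ⟨Nat.prime_three⟩
    obtain ⟨R, hR⟩ := Sylow.exists_subgroup_card_pow_prime (G := ↥H) 3 (n := 2)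
      (by norm_num at h9 ⊢; exact h9)
    have hab : ∀ a b : ↥R, a * b = b * a :=
      IsPGroup.commutative_of_card_eq_prime_sq hR
    have hcube : ∀ x : ↥R, x ^ 3 = 1 := by
      intro x
      have hdvd : orderOf x ∣ 9 := by
        have h0 := orderOf_dvd_natCard x
        rwa [hR] at h0
      have h3 : orderOf x ∣ 3 := by
        rcases hordH R x with h | h | h
        · rw [h]; norm_num
        · rw [h] at hdvd; norm_num at hdvd
        · rw [h]
      exact orderOf_dvd_iff_pow_eq_one.mp h3
    have hcard1 : (1 : ℕ) < Nat.card ↥R := by rw [hR]; norm_num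
    haveI : Nontrivial ↥R := Finite.one_lt_card_iff_nontrivial.mp hcard1
    obtain ⟨x, hx1⟩ := exists_ne (1 : ↥R)
    have hx3 : orderOf x = 3 := by
      rcases hordH R x with h | h | h
      · exact absurd (orderOf_eq_one_iff.mp h) hx1
      · exfalso
        have hdd : orderOf x ∣ 3 := orderOf_dvd_iff_pow_eq_one.mpr (hcube x)
        rw [h] at hdd; norm_num at hdd
      · exact h
    have hzt : Subgroup.zpowers x ≠ ⊤ := by
      intro htop
      have hc : Nat.card ↥(Subgroup.zpowers x) = 3 := by rw [Nat.card_zpowers, hx3]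
      have he : Nat.card ↥(⊤ : Subgroup ↥R) = Nat.card ↥R :=
        Nat.card_congr Subgroup.topEquiv.toEquiv
      rw [htop, he, hR] at hc
      norm_num at hc
    obtain ⟨y, hy⟩ : ∃ y : ↥R, y ∉ Subgroup.zpowers x := by
      by_contra hall
      push_neg at hall
      exact hzt ((Subgroup.eq_top_iff' _).mpr hall)
    set f := H.subtype.comp R.subtype with hf
    have hfinj : Function.Injective f :=
      fun a b hab' => R.subtype_injective (H.subtype_injective hab')
    obtain ⟨n, hn⟩ : ∃ n : ℕ, f y = (f x) ^ n := by
      apply h33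
      · rw [← map_pow, hcube, map_one]
      · rw [← map_pow, hcube, map_one]
      · rw [← map_mul, ← map_mul, hab]
      · intro h; exact hx1 (hfinj (by rw [h, map_one]))
    have hyn : y = x ^ n := hfinj (by rw [hn, map_pow])
    exact hy (Subgroup.mem_zpowers_iff.mpr ⟨(n : ℤ), by rw [zpow_natCast, ← hyn]⟩)
  -- prime divisors are 2 or 3
  have hpr : ∀ p : ℕ, p.Prime → p ∣ Nat.card ↥H → p = 2 ∨ p = 3 := by
    intro p hp hdvd
    haveI := Fintype.ofFinite ↥H
    haveI : Fact p.Prime := ⟨hp⟩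
    obtain ⟨g, hg⟩ := exists_prime_orderOf_dvd_card (G := ↥H) p
      (by rwa [← Nat.card_eq_fintype_card])
    have he := orderOf_injective H.subtype (Subgroup.subtype_injective H) g
    have hfin : IsOfFinOrder (H.subtype g) := (H.subtype).isOfFinOrder (isOfFinOrder_of_finite g)
    rcases hord _ hfin with h | h | h <;> rw [he, hg] at h
    · exact absurd h hp.one_lt.ne'
    · left; exact h
    · right; exact h
  -- card divides 6
  have hn0 : Nat.card ↥H ≠ 0 := Nat.card_pos.ne'
  have hdvd6 : Nat.card ↥H ∣ 6 := by
    rw [← Nat.factorization_le_iff_dvd hn0 (by norm_num)]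
    rw [Finsupp.le_def]
    intro p
    by_cases hp : p.Prime
    swap
    · rw [Nat.factorization_eq_zero_of_not_prime _ hp]; exact Nat.zero_le _
    by_cases hd : p ∣ Nat.card ↥H
    swap
    · rw [Nat.factorization_eq_zero_of_not_dvd hd]; exact Nat.zero_le _
    have hf1 : (Nat.card ↥H).factorization p ≤ 1 := by
      by_contra hgt
      push_neg at hgt
      have : p ^ 2 ∣ Nat.card ↥H :=
        (Nat.Prime.pow_dvd_iff_le_factorization hp hn0).mpr hgt
      rcases hpr p hp hd with rfl | rfl
      · exact h4 (by norm_num at this ⊢; exact this)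
      · exact h9 (by norm_num at this ⊢; exact this)
    have hf2 : 1 ≤ (6 : ℕ).factorization p := by
      rcases hpr p hp hd with rfl | rfl
      · exact (Nat.Prime.pow_dvd_iff_le_factorization hp (by norm_num)).mp (by norm_num)
      · exact (Nat.Prime.pow_dvd_iff_le_factorization hp (by norm_num)).mp (by norm_num)
    omega
  -- case on the cardinality
  have hle : Nat.card ↥H ≤ 6 := Nat.le_of_dvd (by norm_num) hdvd6
  have hge : 1 ≤ Nat.card ↥H := Nat.one_le_iff_ne_zero.mpr hn0
  interval_cases hcard : Nat.card ↥H
  · -- card 1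
    haveI : Subsingleton ↥H := (Nat.card_eq_one_iff_unique.mp hcard).1
    infer_instance
  · haveI : Fact (Nat.Prime 2) := ⟨Nat.prime_two⟩
    exact isCyclic_of_prime_card hcard
  · haveI : Fact (Nat.Prime 3) := ⟨Nat.prime_three⟩
    exact isCyclic_of_prime_card hcard
  · norm_num at hdvd6
  · norm_num at hdvd6
  · -- card 6
    haveI := Fintype.ofFinite ↥H
    have hcard' : Fintype.card ↥H = 6 := by rw [← Nat.card_eq_fintype_card, hcard]
    haveI : Fact (Nat.Prime 2) := ⟨Nat.prime_two⟩
    haveI : Fact (Nat.Prime 3) := ⟨Nat.prime_three⟩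
    obtain ⟨x, hx⟩ := exists_prime_orderOf_dvd_card (G := ↥H) 2 (by rw [hcard']; norm_num)
    obtain ⟨y, hy⟩ := exists_prime_orderOf_dvd_card (G := ↥H) 3 (by rw [hcard']; norm_num)
    have hy3 : y ^ (3 : ℕ) = 1 := by rw [← hy]; exact pow_orderOf_eq_one y
    set Q := Subgroup.zpowers y with hQ
    have hQcard : Nat.card ↥Q = 3 := by rw [hQ, Nat.card_zpowers, hy]
    have hQidx : Q.index = 2 := by
      have := Subgroup.index_mul_card Q
      rw [hQcard, hcard] at this
      omega
    have hmem : x * y * x⁻¹ ∈ Q := by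
      rw [Subgroup.mul_mem_iff_of_index_two hQidx,
        Subgroup.mul_mem_iff_of_index_two hQidx, inv_mem_iff (x := x)]
      have : y ∈ Q := Subgroup.mem_zpowers y
      tauto
    obtain ⟨k, hk⟩ := Subgroup.mem_zpowers_iff.mp hmem
    have hk' : y ^ (k % 3) = x * y * x⁻¹ := by
      have hzm := zpow_mod_orderOf y k
      rw [hy] at hzm
      push_cast at hzm
      rw [hzm]
      exact hk
    have horder3 : orderOf (x * y * x⁻¹) = 3 := by rw [orderOf_conj', hy]
    have hkr : k % 3 = 0 ∨ k % 3 = 1 ∨ k % 3 = 2 := by omega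
    rcases hkr with h | h | h
    · exfalso
      rw [h, zpow_zero] at hk'
      rw [← hk'] at horder3
      simp at horder3
    · -- commuting case : cyclic
      rw [h, zpow_one] at hk'
      have hcomm : Commute x y := by
        have := congrArg (fun w => w * x) hk'
        show x * y = y * x; simpa [mul_assoc] using this.symm
      have h6 : orderOf (x * y) = 6 := by
        rw [hcomm.orderOf_mul_eq_mul_orderOf_of_coprime (by rw [hx, hy]; norm_num), hx, hy]
      exact isCyclic_of_orderOf_eq_card (x * y) (by rw [hcard, h6])
    · -- dihedral-type relation : contradiction with hs3
      exfalso
      rw [h] at hk'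
      have hysq : y ^ (2 : ℤ) = y⁻¹ := by
        have : y ^ (2 : ℤ) * y = 1 := by
          rw [show (2 : ℤ) = ((2 : ℕ) : ℤ) from rfl, zpow_natCast, ← pow_succ]
          exact hy3
        exact eq_inv_of_mul_eq_one_left this
      rw [hysq] at hk'
      have hYeq : (y : Γ) = 1 := by
        have := hs3 (x : Γ) (y : Γ) ?_ ?_
        · exact this
        · have := congrArg H.subtype hy3
          simpa using this
        · have := congrArg (H.subtype) hk'.symm
          simpa using this
      have hy1' : y = 1 := H.subtype_injective (by simpa using hYeq)
      rw [hy1'] at hy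
      simp at hy
end Stmt17Aux

namespace Stmt17Aux
open scoped commutatorElement

theorem comm_central_left {K : Type*} [Group K] {c : K} (hc : ∀ x : K, x * c = c * x)
    (g h : K) : ⁅g * c, h⁆ = ⁅g, h⁆ := by
  have hcent : ∀ x : K, c * x * c⁻¹ = x := by
    intro x
    rw [← hc x]
    group
  calc ⁅g * c, h⁆ = g * (c * h * c⁻¹) * (g⁻¹ * h⁻¹) := by
        rw [commutatorElement_def, mul_inv_rev]
        simp [mul_assoc]
    _ = ⁅g, h⁆ := by rw [hcent h, commutatorElement_def]; simp [mul_assoc]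

theorem comm_central_right {K : Type*} [Group K] {c : K} (hc : ∀ x : K, x * c = c * x)
    (g h : K) : ⁅g, h * c⁆ = ⁅g, h⁆ := by
  have hcent : ∀ x : K, c * x * c⁻¹ = x := by
    intro x
    rw [← hc x]
    group
  calc ⁅g, h * c⁆ = g * h * (c * g⁻¹ * c⁻¹) * h⁻¹ := by
        rw [commutatorElement_def, mul_inv_rev]
        simp [mul_assoc]
    _ = ⁅g, h⁆ := by rw [hcent g⁻¹, commutatorElement_def]

/-- A torsion-free group with a central element of infinite order whose powers have finite
index is infinite cyclic. -/
theorem cyclic_of_central_finite_index {K : Type*} [Group K] (z : K)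
    (hzc : ∀ g : K, g * z = z * g) (hz : ¬ IsOfFinOrder z)
    (hfi : (Subgroup.zpowers z).index ≠ 0)
    (htf : ∀ g : K, IsOfFinOrder g → g = 1) : IsCyclic K := by
  set Z := Subgroup.zpowers z with hZ
  have hZc : Z ≤ Subgroup.center K := by
    rw [hZ, Subgroup.zpowers_le]
    exact Subgroup.mem_center_iff.mpr hzc
  haveI : Z.FiniteIndex := ⟨hfi⟩
  haveI : (Subgroup.center K).FiniteIndex := by
    constructor
    intro h0
    exact hfi (Nat.eq_zero_of_zero_dvd (h0 ▸ Subgroup.index_dvd_of_le hZc))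
  -- the commutator set is finite
  haveI hfinq : Finite (K ⧸ Subgroup.center K) := Subgroup.finite_quotient_of_finiteIndex
  have hcommfin : Finite (commutatorSet K) := by
    have hsub : commutatorSet K ⊆ Set.range
        (fun p : (K ⧸ Subgroup.center K) × (K ⧸ Subgroup.center K) =>
          ⁅(Quotient.out p.1 : K), (Quotient.out p.2 : K)⁆) := by
      rintro c ⟨g, h, rfl⟩
      refine ⟨(QuotientGroup.mk g, QuotientGroup.mk h), ?_⟩
      have hg : ∃ cg ∈ Subgroup.center K, Quotient.out (QuotientGroup.mk (s := Subgroup.center K) g) = g * cg := by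
        have := QuotientGroup.out_eq' (QuotientGroup.mk (s := Subgroup.center K) g)
        rw [QuotientGroup.eq] at this
        refine ⟨g⁻¹ * Quotient.out (QuotientGroup.mk (s := Subgroup.center K) g), ?_, by group⟩
        have h2 := (Subgroup.center K).inv_mem this
        simpa using h2
      have hh : ∃ ch ∈ Subgroup.center K, Quotient.out (QuotientGroup.mk (s := Subgroup.center K) h) = h * ch := by
        have := QuotientGroup.out_eq' (QuotientGroup.mk (s := Subgroup.center K) h)
        rw [QuotientGroup.eq] at this
        refine ⟨h⁻¹ * Quotient.out (QuotientGroup.mk (s := Subgroup.center K) h), ?_, by group⟩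
        have h2 := (Subgroup.center K).inv_mem this
        simpa using h2
      obtain ⟨cg, hcg, hcg'⟩ := hg
      obtain ⟨ch, hch, hch'⟩ := hh
      simp only
      rw [hcg', hch', comm_central_left (Subgroup.mem_center_iff.mp hcg),
        comm_central_right (Subgroup.mem_center_iff.mp hch)]
    exact Set.Finite.subset (Set.finite_range _) hsub
  -- the commutator subgroup is finite, hence trivial
  have hcomm : ∀ g h : K, g * h = h * g := by
    haveI := hcommfin
    have hdvd := Subgroup.card_commutator_dvd_index_center_pow K
    have hpow0 : (Subgroup.center K).index ^
        ((Subgroup.center K).index * Nat.card (commutatorSet K) + 1) ≠ 0 :=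
      pow_ne_zero _ Subgroup.FiniteIndex.index_ne_zero
    have hcard0 : Nat.card ↥(commutator K) ≠ 0 := by
      intro h0
      rw [h0] at hdvd
      exact hpow0 (Nat.eq_zero_of_zero_dvd hdvd)
    haveI : Finite ↥(commutator K) := Nat.finite_of_card_ne_zero hcard0
    intro g h
    have hmem : ⁅g, h⁆ ∈ commutator K :=
      Subgroup.commutator_mem_commutator (Subgroup.mem_top g) (Subgroup.mem_top h)
    have hfin : IsOfFinOrder (⁅g, h⁆) := by
      have h1 : IsOfFinOrder (⟨⁅g, h⁆, hmem⟩ : ↥(commutator K)) := isOfFinOrder_of_finite _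
      exact ((commutator K).subtype).isOfFinOrder h1
    exact (commutatorElement_eq_one_iff_commute.mp (htf _ hfin)).eq
  -- now K is abelian; use the power map into Z
  set n := Z.index with hn
  haveI : Z.Normal := ⟨by
    intro a ha g
    have hcent := Subgroup.mem_center_iff.mp (hZc ha)
    have heq : g * a * g⁻¹ = a := by
      rw [hcent g]
      group
    rwa [heq]⟩
  have hmemZ : ∀ g : K, g ^ n ∈ Z := by
    intro g
    haveI := Fintype.ofFinite (K ⧸ Z)
    have h1 : (QuotientGroup.mk g : K ⧸ Z) ^ Fintype.card (K ⧸ Z) = 1 := pow_card_eq_one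
    have h2 : Fintype.card (K ⧸ Z) = n := by
      rw [hn, Subgroup.index, Nat.card_eq_fintype_card]
    rw [h2] at h1
    rwa [← QuotientGroup.mk_pow, QuotientGroup.eq_one_iff] at h1
  have hn0 : n ≠ 0 := hfi
  -- power homomorphism
  have hinj_zpow : Function.Injective (fun k : ℤ => z ^ k) :=
    injective_zpow_iff_not_isOfFinOrder.mpr hz
  set θ : Multiplicative ℤ →* K := zpowersHom K z with hθ
  have hθ_apply : ∀ k : ℤ, θ (Multiplicative.ofAdd k) = z ^ k := fun k => rfl
  set θ' : Multiplicative ℤ →* ↥Z :=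
    θ.codRestrict Z (fun k => ⟨Multiplicative.toAdd k, rfl⟩) with hθ'
  have hθ'bij : Function.Bijective θ' := by
    constructor
    · intro a b hab
      have : z ^ (Multiplicative.toAdd a) = z ^ (Multiplicative.toAdd b) := by
        have := congrArg (Subtype.val) hab
        exact this
      exact hinj_zpow this
    · rintro ⟨w, hw⟩
      obtain ⟨k, hk⟩ := Subgroup.mem_zpowers_iff.mp hw
      exact ⟨Multiplicative.ofAdd k, Subtype.ext hk⟩
  set e : Multiplicative ℤ ≃* ↥Z := MulEquiv.ofBijective θ' hθ'bij with he
  set ψ : K →* ↥Z :=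
    { toFun := fun g => ⟨g ^ n, hmemZ g⟩
      map_one' := by simp
      map_mul' := by
        intro a b
        apply Subtype.ext
        simp only [Subgroup.coe_mul]
        exact Commute.mul_pow (hcomm a b) n } with hψ
  set f : K →* Multiplicative ℤ := e.symm.toMonoidHom.comp ψ with hfdef
  have finj : Function.Injective f := by
    intro a b hab
    have h1 : ψ a = ψ b := e.symm.injective hab
    have h2 : a ^ n = b ^ n := congrArg Subtype.val h1
    have h3 : (a * b⁻¹) ^ n = 1 := by
      rw [Commute.mul_pow (hcomm a b⁻¹) n, inv_pow, h2, mul_inv_cancel]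
    have h4 : a * b⁻¹ = 1 := htf _ (isOfFinOrder_iff_pow_eq_one.mpr
      ⟨n, Nat.pos_of_ne_zero hn0, h3⟩)
    calc a = a * b⁻¹ * b := by group
    _ = b := by rw [h4, one_mul]
  have e2 : K ≃* ↥f.range := MulEquiv.ofBijective f.rangeRestrict
    ⟨fun a b h => finj (congrArg Subtype.val h), f.rangeRestrict_surjective⟩
  exact isCyclic_of_surjective e2.symm.toMonoidHom e2.symm.surjective

end Stmt17Aux

namespace Stmt17Aux

theorem dihedral_of {Hg : Type*} [Group Hg] (u s : Hg)
    (hs2 : s * s = 1) (hconj : s * u * s⁻¹ = u⁻¹) (hu : ¬ IsOfFinOrder u)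
    (hcover : ∀ h : Hg, (∃ k : ℤ, h = u ^ k) ∨ (∃ k : ℤ, h = s * u ^ k))
    (hsnot : ∀ k : ℤ, s ≠ u ^ k) :
    Nonempty (Hg ≃* DihedralGroup 0) := by
  have hinj : Function.Injective (fun k : ℤ => u ^ k) :=
    injective_zpow_iff_not_isOfFinOrder.mpr hu
  have hsinv : s⁻¹ = s := inv_eq_of_mul_eq_one_right hs2
  have hkey : ∀ k : ℤ, s * u ^ k * s⁻¹ = u ^ (-k) := by
    intro k
    calc s * u ^ k * s⁻¹ = (s * u * s⁻¹) ^ k := by rw [conj_zpow]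
    _ = (u⁻¹) ^ k := by rw [hconj]
    _ = u ^ (-k) := by rw [inv_zpow, zpow_neg]
  have hkey2 : ∀ k : ℤ, u ^ k * s = s * u ^ (-k) := by
    intro k
    have h5 := hkey k
    rw [hsinv] at h5
    calc u ^ k * s = (s * s) * u ^ k * s := by rw [hs2, one_mul]
    _ = s * (s * u ^ k * s) := by group
    _ = s * u ^ (-k) := by rw [h5]
  let fn : DihedralGroup 0 → Hg := fun d =>
    DihedralGroup.casesOn d (fun i => u ^ (show ℤ from i)) (fun i => s * u ^ (show ℤ from i))
  have hadd : ∀ i j : ZMod 0, (show ℤ from i + j) = (show ℤ from i) + (show ℤ from j) :=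
    fun _ _ => rfl
  have hsub : ∀ i j : ZMod 0, (show ℤ from i - j) = (show ℤ from i) - (show ℤ from j) :=
    fun _ _ => rfl
  have hmul : ∀ d₁ d₂ : DihedralGroup 0, fn (d₁ * d₂) = fn d₁ * fn d₂ := by
    intro d₁ d₂
    rcases d₁ with i | i <;> rcases d₂ with j | j
    · show u ^ (show ℤ from i + j) = u ^ (show ℤ from i) * u ^ (show ℤ from j)
      rw [hadd, zpow_add]
    · show s * u ^ (show ℤ from j - i) = u ^ (show ℤ from i) * (s * u ^ (show ℤ from j))
      rw [hsub]
      calc s * u ^ ((show ℤ from j) - (show ℤ from i))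
          = s * u ^ (-(show ℤ from i) + (show ℤ from j)) := by rw [sub_eq_neg_add]
        _ = s * u ^ (-(show ℤ from i)) * u ^ (show ℤ from j) := by rw [mul_assoc, ← zpow_add]
        _ = u ^ (show ℤ from i) * s * u ^ (show ℤ from j) := by rw [← hkey2]
        _ = u ^ (show ℤ from i) * (s * u ^ (show ℤ from j)) := by rw [mul_assoc]
    · show s * u ^ (show ℤ from i + j) = (s * u ^ (show ℤ from i)) * u ^ (show ℤ from j)
      rw [hadd, zpow_add, mul_assoc]
    · show u ^ (show ℤ from j - i) = (s * u ^ (show ℤ from i)) * (s * u ^ (show ℤ from j))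
      rw [hsub]
      calc u ^ ((show ℤ from j) - (show ℤ from i))
          = u ^ (-(show ℤ from i)) * u ^ (show ℤ from j) := by rw [← zpow_add, neg_add_eq_sub]
        _ = (s * s) * u ^ (-(show ℤ from i)) * u ^ (show ℤ from j) := by rw [hs2, one_mul]
        _ = s * (s * u ^ (-(show ℤ from i))) * u ^ (show ℤ from j) := by rw [mul_assoc s s _]
        _ = s * (u ^ (show ℤ from i) * s) * u ^ (show ℤ from j) := by rw [← hkey2]
        _ = (s * u ^ (show ℤ from i)) * (s * u ^ (show ℤ from j)) := by
            rw [mul_assoc, mul_assoc, mul_assoc]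
  let f : DihedralGroup 0 →* Hg :=
    { toFun := fn
      map_one' := by
        show u ^ (show ℤ from (0 : ZMod 0)) = 1
        exact zpow_zero u
      map_mul' := hmul }
  have hbij : Function.Bijective f := by
    constructor
    · intro d₁ d₂ hd
      rcases d₁ with i | i <;> rcases d₂ with j | j
      · have : u ^ (show ℤ from i) = u ^ (show ℤ from j) := hd
        have := hinj this
        exact congrArg DihedralGroup.r this
      · exfalso
        have h1 : u ^ (show ℤ from i) = s * u ^ (show ℤ from j) := hd
        apply hsnot ((show ℤ from i) - (show ℤ from j))
        have : s = u ^ (show ℤ from i) * (u ^ (show ℤ from j))⁻¹ := by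
          rw [h1]; group
        rw [this, ← zpow_neg, ← zpow_add, ← sub_eq_add_neg]
      · exfalso
        have h1 : s * u ^ (show ℤ from i) = u ^ (show ℤ from j) := hd
        apply hsnot ((show ℤ from j) - (show ℤ from i))
        have : s = u ^ (show ℤ from j) * (u ^ (show ℤ from i))⁻¹ := by
          rw [← h1]; group
        rw [this, ← zpow_neg, ← zpow_add, ← sub_eq_add_neg]
      · have h1 : s * u ^ (show ℤ from i) = s * u ^ (show ℤ from j) := hd
        have h2 := hinj (mul_left_cancel h1)
        exact congrArg DihedralGroup.sr h2
    · intro h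
      rcases hcover h with ⟨k, rfl⟩ | ⟨k, rfl⟩
      · exact ⟨DihedralGroup.r (show ZMod 0 from k), rfl⟩
      · exact ⟨DihedralGroup.sr (show ZMod 0 from k), rfl⟩
  exact ⟨(MulEquiv.ofBijective f hbij).symm⟩

end Stmt17Aux

namespace Stmt17Aux

open Monoid Monoid.CoprodI

theorem not_isOfFinOrder_of_injective {G H : Type*} [Group G] [Group H] (f : G →* H)
    (hf : Function.Injective f) {x : G} (hx : ¬ IsOfFinOrder x) : ¬ IsOfFinOrder (f x) := by
  intro h
  apply hx
  have h0 : orderOf (f x) ≠ 0 := fun h1 => (orderOf_eq_zero_iff.mp h1) h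
  have h2 : orderOf x ≠ 0 := by rwa [orderOf_injective f hf x] at h0
  by_contra hc
  exact h2 (orderOf_eq_zero_iff.mpr hc)

theorem infinite_of_cyclic_gen {G : Type*} [Group G] [Infinite G] {g : G}
    (hg : ∀ x : G, x ∈ Subgroup.zpowers g) : ¬ IsOfFinOrder g := by
  intro h
  have h1 : (Subgroup.zpowers g : Set G).Finite := h.finite_zpowers
  have h2 : (Subgroup.zpowers g : Set G) = Set.univ := by
    rw [Set.eq_univ_iff_forall]
    exact hg
  rw [h2] at h1
  exact Set.infinite_univ h1

theorem delta_main (H : Subgroup Δ)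
    (hvc : ∃ C : Subgroup ↥H, IsCyclic ↥C ∧ C.index ≠ 0) :
    IsCyclic ↥H ∨ Nonempty (↥H ≃* DihedralGroup 0) := by
  obtain ⟨C, hCcyc, hCidx⟩ := hvc
  by_cases hfin : Finite ↥H
  · left
    exact finite_subgroup_cyclic H (fun x hx => delta_orders hx)
      (fun x y h1 h2 h3 h4 h5 => delta_no_klein h1 h2 h3 h4 h5)
      (fun x y h1 h2 h3 h4 => delta_three_comm h1 h2 h3 h4)
      (fun x y h1 h2 => delta_no_s3 h1 h2)
  · -- infinite case
    haveI : C.FiniteIndex := ⟨hCidx⟩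
    haveI hCinf : Infinite ↥C := by
      by_contra hinf
      have hCfin : Finite ↥C := not_infinite_iff_finite.mp hinf
      apply hfin
      apply Nat.finite_of_card_ne_zero
      rw [← C.index_mul_card]
      exact Nat.mul_ne_zero hCidx Nat.card_pos.ne'
    set N := C.normalCore with hN
    haveI hNnorm : N.Normal := Subgroup.normalCore_normal C
    haveI hNfi : N.FiniteIndex := by rw [hN]; infer_instance
    haveI : IsCyclic ↥(N.subgroupOf C) := Subgroup.isCyclic _
    haveI hNcyc : IsCyclic ↥N := by
      have e := Subgroup.subgroupOfEquivOfLe (Subgroup.normalCore_le C)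
      exact isCyclic_of_surjective e.toMonoidHom e.surjective
    haveI hNinf : Infinite ↥N := by
      by_contra hinf
      have hNfin : Finite ↥N := not_infinite_iff_finite.mp hinf
      apply hfin
      apply Nat.finite_of_card_ne_zero
      rw [← N.index_mul_card]
      exact Nat.mul_ne_zero Subgroup.FiniteIndex.index_ne_zero Nat.card_pos.ne'
    obtain ⟨ζ, hζ⟩ := IsCyclic.exists_generator (α := ↥N)
    have hζinf : ¬ IsOfFinOrder ζ := infinite_of_cyclic_gen hζ
    set z : ↥H := (ζ : ↥H) with hzdef
    have hzmem : z ∈ N := ζ.2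
    have hz_inf : ¬ IsOfFinOrder z :=
      not_isOfFinOrder_of_injective N.subtype (Subgroup.subtype_injective N) hζinf
    have hzinj : Function.Injective (fun k : ℤ => z ^ k) :=
      injective_zpow_iff_not_isOfFinOrder.mpr hz_inf
    -- elements of N are powers of z
    have hNpow : ∀ n : ↥H, n ∈ N → ∃ k : ℤ, n = z ^ k := by
      intro n hn
      obtain ⟨k, hk⟩ := Subgroup.mem_zpowers_iff.mp (hζ ⟨n, hn⟩)
      refine ⟨k, ?_⟩
      have h1 : ((ζ ^ k : ↥N) : ↥H) = n := congrArg N.subtype hk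
      rw [← h1]
      simp [hzdef]
    -- dichotomy for the conjugation action on N
    have conj_zpow' : ∀ (a b : ↥H) (n : ℤ), (a⁻¹ * b * a) ^ n = a⁻¹ * b ^ n * a := by
      intro a b n
      have := conj_zpow (a := a⁻¹) (b := b) (i := n)
      simpa using this
    have hdi : ∀ h : ↥H, h * z * h⁻¹ = z ∨ h * z * h⁻¹ = z⁻¹ := by
      intro h
      have hm1 : h * z * h⁻¹ ∈ N := hNnorm.conj_mem z hzmem h
      have hm2 : h⁻¹ * z * h ∈ N := by
        have := hNnorm.conj_mem z hzmem h⁻¹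
        simpa using this
      obtain ⟨k, hk⟩ := hNpow _ hm1
      obtain ⟨l, hl⟩ := hNpow _ hm2
      have hzz : z = z ^ (l * k) := by
        calc z = h⁻¹ * (h * z * h⁻¹) * h := by group
        _ = h⁻¹ * z ^ k * h := by rw [← hk]
        _ = (h⁻¹ * z * h) ^ k := (conj_zpow' h z k).symm
        _ = (z ^ l) ^ k := by rw [← hl]
        _ = z ^ (l * k) := by rw [← zpow_mul]
      have hlk : l * k = 1 := by
        have h9 : z ^ (l * k) = z ^ (1 : ℤ) := by rw [zpow_one, ← hzz]
        exact hzinj h9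
      rcases Int.mul_eq_one_iff_eq_one_or_neg_one.mp hlk with ⟨-, hk1⟩ | ⟨-, hk1⟩
      · left; rw [hk, hk1, zpow_one]
      · right; rw [hk, hk1]; exact zpow_neg_one z
    -- the sign map
    have hzne : z⁻¹ ≠ z := by
      intro h
      apply hz_inf
      refine isOfFinOrder_iff_pow_eq_one.mpr ⟨2, by norm_num, ?_⟩
      rw [pow_two]
      nth_rewrite 2 [← h]
      simp
    set ε : ↥H → ℤˣ := fun h => if h * z * h⁻¹ = z then 1 else -1 with hε
    have hεspec : ∀ h : ↥H, h * z * h⁻¹ = z ^ ((ε h : ℤˣ) : ℤ) := by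
      intro h
      by_cases hc : h * z * h⁻¹ = z
      · rw [hε]; simp only [if_pos hc]
        rw [hc]
        norm_num
      · rw [hε]; simp only [if_neg hc]
        rcases hdi h with h1 | h1
        · exact absurd h1 hc
        · rw [h1]
          norm_num
    have hhom : ∀ a b : ↥H, ε (a * b) = ε a * ε b := by
      intro a b
      have h1 : (a * b) * z * (a * b)⁻¹ = z ^ (((ε a * ε b : ℤˣ) : ℤ)) := by
        calc (a * b) * z * (a * b)⁻¹ = a * (b * z * b⁻¹) * a⁻¹ := by group
        _ = a * z ^ ((ε b : ℤˣ) : ℤ) * a⁻¹ := by rw [hεspec b]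
        _ = (a * z * a⁻¹) ^ ((ε b : ℤˣ) : ℤ) := by rw [conj_zpow]
        _ = (z ^ ((ε a : ℤˣ) : ℤ)) ^ ((ε b : ℤˣ) : ℤ) := by rw [hεspec a]
        _ = z ^ (((ε a : ℤˣ) : ℤ) * ((ε b : ℤˣ) : ℤ)) := by rw [← zpow_mul]
        _ = z ^ (((ε a * ε b : ℤˣ) : ℤ)) := by rw [Units.val_mul]
      have h2 := hεspec (a * b)
      have h3 : (((ε (a * b) : ℤˣ)) : ℤ) = ((ε a * ε b : ℤˣ) : ℤ) :=
        hzinj (h2.symm.trans h1)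
      exact Units.ext h3
    set φ : ↥H →* ℤˣ := MonoidHom.mk' ε hhom with hφ
    set K := φ.ker with hK
    have hKdvd : K.index ∣ 2 := by
      rw [hK, Subgroup.index_ker]
      have h1 : Nat.card ↥φ.range ∣ Nat.card ℤˣ := Subgroup.card_subgroup_dvd_card φ.range
      rwa [show Nat.card ℤˣ = 2 by rw [Nat.card_eq_fintype_card]; rfl] at h1
    have hKidx : K.index ≠ 0 := by
      intro h0
      rw [h0] at hKdvd
      norm_num at hKdvd
    have hmemK : ∀ h : ↥H, h ∈ K ↔ h * z * h⁻¹ = z := by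
      intro h
      rw [hK, MonoidHom.mem_ker, hφ]
      constructor
      · intro h1
        have h2 : ε h = 1 := h1
        have := hεspec h
        rw [h2] at this
        simpa using this
      · intro h1
        show ε h = 1
        rw [hε]
        simp [h1]
    have hzK : z ∈ K := by
      rw [hmemK]
      group
    have hNK : N ≤ K := by
      intro n hn
      obtain ⟨k, rfl⟩ := hNpow n hn
      rw [hmemK]
      group
    -- K is torsion-free
    have hKtf : ∀ g : ↥K, IsOfFinOrder g → g = 1 := by
      intro g hg
      by_contra hg1
      set f := H.subtype.comp K.subtype with hf
      have hfinj : Function.Injective f :=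
        fun a b hab' => K.subtype_injective (H.subtype_injective hab')
      have ht : IsOfFinOrder (f g) := f.isOfFinOrder hg
      have ht1 : f g ≠ 1 := fun h => hg1 (hfinj (by rw [h, map_one]))
      have hzD : ¬ IsOfFinOrder ((z : Δ)) :=
        not_isOfFinOrder_of_injective H.subtype (Subgroup.subtype_injective H) hz_inf
      have hcommD : f g * (z : Δ) = (z : Δ) * f g := by
        have h1 : (g : ↥H) * z * (g : ↥H)⁻¹ = z := (hmemK _).mp g.2
        have h2 : (g : ↥H) * z = z * (g : ↥H) := by
          have := congrArg (fun w => w * (g : ↥H)) h1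
          simpa [mul_assoc] using this
        have := congrArg H.subtype h2
        simpa [hf] using this
      exact delta_torsion_free_comm ht ht1 hzD hcommD
    -- K is cyclic
    have hzKc : ∀ g : ↥K, g * (⟨z, hzK⟩ : ↥K) = (⟨z, hzK⟩ : ↥K) * g := by
      intro g
      apply Subtype.ext
      have h1 : (g : ↥H) * z * (g : ↥H)⁻¹ = z := (hmemK _).mp g.2
      have := congrArg (fun w => w * (g : ↥H)) h1
      simpa [mul_assoc] using this
    have hzKinf : ¬ IsOfFinOrder (⟨z, hzK⟩ : ↥K) := by
      intro h
      apply hz_inf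
      have := K.subtype.isOfFinOrder h
      simpa using this
    have hidxK : (Subgroup.zpowers (⟨z, hzK⟩ : ↥K)).index ≠ 0 := by
      have hle : N.subgroupOf K ≤ Subgroup.zpowers (⟨z, hzK⟩ : ↥K) := by
        intro g hg
        obtain ⟨k, hk⟩ := hNpow (g : ↥H) hg
        refine Subgroup.mem_zpowers_iff.mpr ⟨k, ?_⟩
        apply Subtype.ext
        simp only [Subgroup.coe_zpow]
        exact hk.symm
      have h1 : (N.subgroupOf K).index ≠ 0 := by
        have h2 : N.relIndex K ∣ N.index := Subgroup.relIndex_dvd_index_of_le hNK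
        intro h0
        rw [Subgroup.relIndex] at h2
        rw [h0] at h2
        exact Subgroup.FiniteIndex.index_ne_zero (Nat.eq_zero_of_zero_dvd h2)
      intro h0
      apply h1
      exact Nat.eq_zero_of_zero_dvd (h0 ▸ Subgroup.index_dvd_of_le hle)
    haveI hKcyc : IsCyclic ↥K :=
      cyclic_of_central_finite_index (⟨z, hzK⟩ : ↥K) hzKc hzKinf hidxK hKtf
    by_cases hKtop : K = ⊤
    · left
      haveI : IsCyclic ↥(⊤ : Subgroup ↥H) := hKtop ▸ hKcyc
      exact isCyclic_of_surjective Subgroup.topEquiv.toMonoidHom Subgroup.topEquiv.surjective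
    · right
      obtain ⟨s, hs⟩ : ∃ s : ↥H, s ∉ K := by
        by_contra hall
        push_neg at hall
        exact hKtop ((Subgroup.eq_top_iff' _).mpr hall)
      haveI : Infinite ↥K :=
        Infinite.of_injective (Subgroup.inclusion hNK) (Subgroup.inclusion_injective hNK)
      obtain ⟨υ, hυ⟩ := IsCyclic.exists_generator (α := ↥K)
      have hυinf : ¬ IsOfFinOrder υ := infinite_of_cyclic_gen hυ
      set u : ↥H := (υ : ↥H) with hudef
      have huK : u ∈ K := υ.2
      have hu_inf : ¬ IsOfFinOrder u :=
        not_isOfFinOrder_of_injective K.subtype (Subgroup.subtype_injective K) hυinf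
      have huinj : Function.Injective (fun k : ℤ => u ^ k) :=
        injective_zpow_iff_not_isOfFinOrder.mpr hu_inf
      have hKpow : ∀ g : ↥H, g ∈ K → ∃ k : ℤ, g = u ^ k := by
        intro g hg
        obtain ⟨k, hk⟩ := Subgroup.mem_zpowers_iff.mp (hυ ⟨g, hg⟩)
        refine ⟨k, ?_⟩
        have h1 : ((υ ^ k : ↥K) : ↥H) = g := congrArg K.subtype hk
        rw [← h1]
        simp [hudef]
      -- s inverts z
      have hεs : φ s = -1 := by
        rcases Int.units_eq_one_or (φ s) with h1 | h1
        · exact absurd (by rwa [hK, MonoidHom.mem_ker]) hs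
        · exact h1
      have hsz : s * z * s⁻¹ = z⁻¹ := by
        have := hεspec s
        have h2 : ε s = φ s := rfl
        rw [h2, hεs] at this
        simpa using this
      -- K is normal, so s u s⁻¹ = u ^ e
      haveI : K.Normal := by rw [hK]; exact MonoidHom.normal_ker φ
      have hsuK : s * u * s⁻¹ ∈ K := ‹K.Normal›.conj_mem u huK s
      obtain ⟨e, he⟩ := hKpow _ hsuK
      -- z = u ^ m
      obtain ⟨m, hm⟩ := hKpow z hzK
      have hm0 : m ≠ 0 := by
        rintro rfl
        apply hz_inf
        rw [hm, zpow_zero]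
        exact IsOfFinOrder.one
      -- e = -1
      have hconjpow : ∀ k : ℤ, s * u ^ k * s⁻¹ = u ^ (e * k) := by
        intro k
        rw [zpow_mul, ← he, conj_zpow]
      have he1 : e = -1 := by
        have h1 : s * z * s⁻¹ = u ^ (e * m) := by rw [hm, hconjpow]
        rw [hsz, hm, ← zpow_neg] at h1
        have h2 : -m = e * m := huinj h1
        have := mul_left_cancel₀ hm0 (by linarith [h2] : m * e = m * (-1))
        linarith [this]
      -- s * s = 1
      have hs2K : s * s ∈ K := by
        rw [hK, MonoidHom.mem_ker, map_mul, hεs]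
        norm_num
      obtain ⟨k, hk⟩ := hKpow _ hs2K
      have hss : s * s = 1 := by
        have h1 : s * (s * s) * s⁻¹ = s * s := by group
        rw [hk, hconjpow, he1] at h1
        have h2 : -1 * k = k := huinj h1
        have hk0 : k = 0 := by linarith
        rw [hk, hk0, zpow_zero]
      -- covering
      have hcover : ∀ h : ↥H, (∃ k : ℤ, h = u ^ k) ∨ (∃ k : ℤ, h = s * u ^ k) := by
        intro h
        by_cases hh : h ∈ K
        · left; exact hKpow h hh
        · right
          have hφh : φ h = -1 := by
            rcases Int.units_eq_one_or (φ h) with h1 | h1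
            · exact absurd (by rwa [hK, MonoidHom.mem_ker]) hh
            · exact h1
          have hmem : s⁻¹ * h ∈ K := by
            rw [hK, MonoidHom.mem_ker, map_mul, map_inv, hεs, hφh]
            norm_num
          obtain ⟨k, hk⟩ := hKpow _ hmem
          refine ⟨k, ?_⟩
          rw [← hk]
          group
      have hsnot : ∀ k : ℤ, s ≠ u ^ k := by
        intro k h1
        apply hs
        rw [h1]
        exact Subgroup.zpow_mem K huK k
      -- conclude
      have hconj : s * u * s⁻¹ = u⁻¹ := by
        rw [he, he1]
        norm_num
      exact dihedral_of u s hss hconj hu_inf hcover hsnot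

end Stmt17Aux

namespace Stmt17Aux

open Monoid Monoid.CoprodI

def bmap : (b : Bool) → Gf b →* Monoid.Coprod M2 M3
  | true => Monoid.Coprod.inl
  | false => Monoid.Coprod.inr

noncomputable def fwdA : M2 →* Δ := CoprodI.of (M := Gf) (i := true)

noncomputable def fwdB : M3 →* Δ := CoprodI.of (M := Gf) (i := false)

noncomputable def fwd : Monoid.Coprod M2 M3 →* Δ :=
  Monoid.Coprod.lift fwdA fwdB

noncomputable def bwd : Δ →* Monoid.Coprod M2 M3 :=
  CoprodI.lift bmap

theorem bwd_fwd : bwd.comp fwd = MonoidHom.id _ := by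
  apply Monoid.Coprod.hom_ext
  · refine MonoidHom.ext fun x => ?_
    show bwd (fwd (Monoid.Coprod.inl x)) = Monoid.Coprod.inl x
    rw [fwd, Monoid.Coprod.lift_apply_inl]
    show CoprodI.lift bmap (of (i := true) x) = _
    erw [CoprodI.lift_of]
  · refine MonoidHom.ext fun x => ?_
    show bwd (fwd (Monoid.Coprod.inr x)) = Monoid.Coprod.inr x
    rw [fwd, Monoid.Coprod.lift_apply_inr]
    show CoprodI.lift bmap (of (i := false) x) = _
    erw [CoprodI.lift_of]

theorem fwd_bwd : fwd.comp bwd = MonoidHom.id _ := by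
  apply CoprodI.ext_hom
  intro i
  refine MonoidHom.ext fun x => ?_
  show fwd (bwd (of x)) = of x
  rw [bwd, CoprodI.lift_of]
  cases i
  · show fwd (Monoid.Coprod.inr x) = of x
    erw [fwd, Monoid.Coprod.lift_apply_inr]
  · show fwd (Monoid.Coprod.inl x) = of x
    erw [fwd, Monoid.Coprod.lift_apply_inl]

noncomputable def equivCG : Monoid.Coprod M2 M3 ≃* Δ :=
  MonoidHom.toMulEquiv fwd bwd bwd_fwd fwd_bwd

end Stmt17Aux

/-- Every virtually cyclic subgroup of `Γ = ℤ/2 * ℤ/3 ≅ PSL₂(ℤ)` is either cyclic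
or infinite dihedral (`DihedralGroup 0` is the infinite dihedral group). -/
theorem stmt17
    (H : Subgroup (Monoid.Coprod (Multiplicative (ZMod 2)) (Multiplicative (ZMod 3))))
    (hvc : ∃ C : Subgroup H, IsCyclic C ∧ C.index ≠ 0) :
    IsCyclic H ∨ Nonempty (H ≃* DihedralGroup 0) := by
  obtain ⟨C, hCcyc, hCidx⟩ := hvc
  set e := Stmt17Aux.equivCG with he
  set H' : Subgroup Stmt17Aux.Δ := H.map e.toMonoidHom with hH'
  have eH : ↥H ≃* ↥H' := Subgroup.equivMapOfInjective H e.toMonoidHom e.injective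
  set C' : Subgroup ↥H' := C.map eH.toMonoidHom with hC'
  have hC'cyc : IsCyclic ↥C' := by
    have eC : ↥C ≃* ↥C' := Subgroup.equivMapOfInjective C eH.toMonoidHom eH.injective
    exact isCyclic_of_surjective eC.toMonoidHom eC.surjective
  have hC'idx : C'.index ≠ 0 := by
    have h1 : Subgroup.comap eH.toMonoidHom C' = C :=
      Subgroup.comap_map_eq_self_of_injective eH.injective C
    have h2 : (Subgroup.comap eH.toMonoidHom C').index = C'.index :=
      Subgroup.index_comap_of_surjective C' eH.surjective
    rw [h1] at h2
    rw [← h2]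
    exact hCidx
  rcases Stmt17Aux.delta_main H' ⟨C', hC'cyc, hC'idx⟩ with h | hd
  · left
    exact isCyclic_of_surjective eH.symm.toMonoidHom eH.symm.surjective
  · right
    obtain ⟨d⟩ := hd
    exact ⟨eH.trans d⟩
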